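/- Let Γ be a linearly ordered additive commutative group and let L be a field equipped with an additive valuation v : L → WithTop Γ (so v(ab) = v(a) + v(b), v(a+b) ≥ min(v(a),v(b)), v(0) = ⊤, v(1) = 0). Let k ≥ 1 and let b₁,…,b_k ∈ L, not all zero. Let m := min_{1 ≤ i ≤ k} v(bᵢ) (which is then an element of Γ, not ⊤), and let s := #{i : v(bᵢ) = m}, so 1 ≤ s ≤ k. Then v(e_s(b₁,…,b_k)) = s•m. -/

import Mathlib

/-- `j`-th elementary symmetric function of `b 0, …, b (k-1)`:
the sum of all products of `j` of them with distinct indices (`e₀ = 1`). -/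
def esym {A : Type*} [CommSemiring A] {k : ℕ} (b : Fin k → A) (j : ℕ) : A :=
  ∑ T ∈ Finset.powersetCard j Finset.univ, ∏ i ∈ T, b i

/-- Newton-polygon step: if `m` is the minimal valuation of `b₁, …, b_k`
(not all zero, so `m ∈ Γ`) and `s` is the number of indices realizing the
minimum, then `v(e_s(b₁,…,b_k)) = s • m` (no cancellation occurs). -/
theorem valuation_esymm_min
    {Γ : Type*} [AddCommGroup Γ] [LinearOrder Γ] [IsOrderedAddMonoid Γ] {L : Type*} [Field L]
    (v : L → WithTop Γ)
    (hv_mul : ∀ a b : L, v (a * b) = v a + v b)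
    (hv_add : ∀ a b : L, min (v a) (v b) ≤ v (a + b))
    (hv_zero : v 0 = ⊤) (hv_one : v 1 = 0)
    (k : ℕ) (hk : 1 ≤ k) (b : Fin k → L) (hb : ∃ i, b i ≠ 0)
    (m : Γ) (hm : (m : WithTop Γ) = Finset.univ.inf (fun i => v (b i))) :
    v (esym b (Nat.card {i : Fin k // v (b i) = (m : WithTop Γ)})) =
      ((Nat.card {i : Fin k // v (b i) = (m : WithTop Γ)} • m : Γ) : WithTop Γ) := by
  classical
  -- v(-a) = v a
  have hneg1 : v (-1 : L) = 0 := by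
    have h := hv_mul (-1) (-1)
    rw [neg_mul_neg, one_mul, hv_one] at h
    have hne : v (-1 : L) ≠ ⊤ := by
      intro ht; rw [ht] at h; simp at h
    lift v (-1 : L) to Γ using hne with y hy'
    have hy : y + y = 0 := by exact_mod_cast h.symm
    have : y = 0 := by
      rcases lt_trichotomy y 0 with h1 | h1 | h1
      · have := add_lt_add h1 h1; rw [hy, add_zero] at this; exact absurd this (lt_irrefl 0)
      · exact h1
      · have := add_lt_add h1 h1; rw [hy, add_zero] at this; exact absurd this (lt_irrefl 0)
    simp [this]
  have hneg : ∀ a : L, v (-a) = v a := by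
    intro a
    have := hv_mul (-1) a
    rw [neg_one_mul, hneg1, zero_add] at this
    exact this
  -- v(a + b) = v a when v a < v b
  have hadd_eq : ∀ a c : L, v a < v c → v (a + c) = v a := by
    intro a c hlt
    refine le_antisymm ?_ ?_
    · have h1 : min (v (a + c)) (v (-c)) ≤ v (a + c + -c) := hv_add _ _
      rw [add_neg_cancel_right, hneg] at h1
      rcases min_le_iff.mp h1 with h | h
      · exact h
      · exact absurd h (not_le.mpr hlt)
    · calc v a = min (v a) (v c) := (min_eq_left hlt.le).symm
        _ ≤ v (a + c) := hv_add a c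
  -- v of products
  have hns : ∀ n : ℕ, (n • (m : WithTop Γ)) = ((n • m : Γ) : WithTop Γ) := by
    intro n; push_cast; rfl
  have hprod : ∀ (T : Finset (Fin k)), v (∏ i ∈ T, b i) = ∑ i ∈ T, v (b i) := by
    intro T
    induction T using Finset.induction with
    | empty => simp [hv_one]
    | insert _ _ hx ih =>
      rw [Finset.prod_insert hx, Finset.sum_insert hx, hv_mul, ih]
  -- strict lower bound on v of sums
  have hsum_lt : ∀ (c : WithTop Γ), c ≠ ⊤ → ∀ {ι : Type} (T : Finset ι) (f : ι → L),
      (∀ i ∈ T, c < v (f i)) → c < v (∑ i ∈ T, f i) := by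
    intro c hc ι T f hT
    induction T using Finset.induction with
    | empty => simp [hv_zero, lt_top_iff_ne_top, hc]
    | @insert x T hx ih =>
      rw [Finset.sum_insert hx]
      have h1 := hv_add (f x) (∑ i ∈ T, f i)
      have h2 : c < min (v (f x)) (v (∑ i ∈ T, f i)) :=
        lt_min (hT x (Finset.mem_insert_self _ _))
          (ih fun i hi => hT i (Finset.mem_insert_of_mem hi))
      exact h2.trans_le h1
  -- the set of minimal indices
  set S : Finset (Fin k) := Finset.univ.filter (fun i => v (b i) = (m : WithTop Γ)) with hS
  have hcard : Nat.card {i : Fin k // v (b i) = (m : WithTop Γ)} = S.card := by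
    rw [Nat.card_eq_fintype_card, Fintype.card_subtype]
  set s := S.card with hs
  rw [hcard]
  have hmle : ∀ i : Fin k, (m : WithTop Γ) ≤ v (b i) := by
    intro i
    rw [hm]
    exact Finset.inf_le (Finset.mem_univ i)
  -- v of the product over S
  have hvS : v (∏ i ∈ S, b i) = ((s • m : Γ) : WithTop Γ) := by
    rw [hprod]
    rw [Finset.sum_congr rfl (fun i hi => (Finset.mem_filter.mp hi).2)]
    rw [Finset.sum_const]
    push_cast
    rfl
  -- strict bound for other T
  have hother : ∀ T ∈ Finset.powersetCard s (Finset.univ : Finset (Fin k)), T ≠ S →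
      ((s • m : Γ) : WithTop Γ) < v (∏ i ∈ T, b i) := by
    intro T hT hTS
    rw [Finset.mem_powersetCard] at hT
    obtain ⟨-, hTcard⟩ := hT
    -- there is j ∈ T \ S
    have hnot : ¬ T ⊆ S := by
      intro hsub
      exact hTS (Finset.eq_of_subset_of_card_le hsub (by rw [hTcard]))
    obtain ⟨j, hjT, hjS⟩ := Finset.not_subset.mp hnot
    have hjv : (m : WithTop Γ) < v (b j) := by
      refine lt_of_le_of_ne (hmle j) ?_
      intro h
      exact hjS (Finset.mem_filter.mpr ⟨Finset.mem_univ j, h.symm⟩)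
    rw [hprod]
    rw [← Finset.sum_erase_add _ _ hjT]
    have h1 : ((T.erase j).card • (m : WithTop Γ)) ≤ ∑ i ∈ T.erase j, v (b i) :=
      Finset.card_nsmul_le_sum _ _ _ (fun i _ => hmle i)
    have hcard' : (T.erase j).card = s - 1 := by
      rw [Finset.card_erase_of_mem hjT, hTcard]
    have hs1 : 1 ≤ s := by
      rcases Nat.eq_zero_or_pos s with h0 | h0
      · exfalso; apply hTS; rw [Finset.card_eq_zero.mp (hTcard.trans h0)]
        exact (Finset.card_eq_zero.mp (hs ▸ h0.symm ▸ rfl : S.card = 0)).symm ▸ rfl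
      · exact h0
    have key : ((s • m : Γ) : WithTop Γ) = ((s-1) • (m : WithTop Γ)) + (m : WithTop Γ) := by
      push_cast
      rw [← succ_nsmul]
      congr 1
      omega
    rw [key]
    refine WithTop.add_lt_add_of_le_of_lt ?_ ?_ hjv
    · rw [hns]; exact WithTop.coe_ne_top
    · rw [← hcard']; exact h1
  -- assemble
  have hSmem : S ∈ Finset.powersetCard s (Finset.univ : Finset (Fin k)) := by
    rw [Finset.mem_powersetCard]
    exact ⟨Finset.subset_univ _, rfl⟩
  rw [esym]
  rw [← Finset.add_sum_erase _ _ hSmem]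
  rw [hadd_eq, hvS]
  rw [hvS]
  refine hsum_lt _ WithTop.coe_ne_top _ _ ?_
  intro T hT
  rw [Finset.mem_erase] at hT
  exact hother T hT.2 hT.1
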